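/- arXiv:1810.04390 — 3 statements merged into one kernel-verified Lean document; each statement's English description precedes it below -/
import Mathlib

section
/- Let S ∈ ℝ^{m×m} be symmetric negative semidefinite and nonzero, and let P ∈ ℝ^{m×m} be symmetric positive definite, with P = AᵀA for invertible A. Then max { β ≥ 0 : βS + P is positive semidefinite } = -1/λ₁, where λ₁ < 0 is the smallest eigenvalue of A^{-T} S A^{-1}. -/
open Matrix

/-- The regularized monotonicity indicator: for symmetric negative semidefinite `S ≠ 0`
and symmetric positive definite `P = AᵀA` with `A` invertible,
`max {β ≥ 0 : βS + P psd} = -1/λ₁` where `λ₁ < 0` is the smallest eigenvalue of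
`A⁻ᵀ S A⁻¹`. -/
theorem stmt_1 {m : ℕ} (S P A : Matrix (Fin m) (Fin m) ℝ)
    (hS : S.IsHermitian) (hSneg : (-S).PosSemidef) (hS0 : S ≠ 0)
    (hP : P.PosDef) [Invertible A] (hPA : P = Aᵀ * A)
    (hM : ((A⁻¹)ᵀ * S * A⁻¹).IsHermitian) :
    (⨅ i, hM.eigenvalues i) < 0 ∧
      IsGreatest {β : ℝ | 0 ≤ β ∧ (β • S + P).PosSemidef}
        (-1 / (⨅ i, hM.eigenvalues i)) := by
  have hm : Nonempty (Fin m) := by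
    rcases Nat.eq_zero_or_pos m with h | h
    · exfalso; apply hS0; subst h; ext i j; exact i.elim0
    · exact ⟨⟨0, h⟩⟩
  set M : Matrix (Fin m) (Fin m) ℝ := (A⁻¹)ᵀ * S * A⁻¹ with hMdef
  set lam : Fin m → ℝ := hM.eigenvalues with hlam
  set l1 : ℝ := ⨅ i, lam i with hl1
  have hAt : Aᵀ * (A⁻¹)ᵀ = 1 := by
    rw [← transpose_mul, Matrix.inv_mul_of_invertible, transpose_one]
  have hAt' : (A⁻¹)ᵀ * Aᵀ = 1 := by
    rw [← transpose_mul, Matrix.mul_inv_of_invertible, transpose_one]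
  -- S recovered from M
  have hSM : Aᵀ * M * A = S := by
    rw [hMdef]
    calc Aᵀ * ((A⁻¹)ᵀ * S * A⁻¹) * A
        = (Aᵀ * (A⁻¹)ᵀ) * S * (A⁻¹ * A) := by
          simp only [Matrix.mul_assoc]
      _ = S := by rw [hAt, Matrix.inv_mul_of_invertible]; simp
  -- congruence identities
  have key : ∀ β : ℝ, β • S + P = Aᵀ * (β • M + 1) * A := by
    intro β
    rw [Matrix.mul_add, Matrix.add_mul, Matrix.mul_smul, Matrix.smul_mul, hSM,
      Matrix.mul_one, ← hPA]
  have key' : ∀ β : ℝ, β • M + 1 = (A⁻¹)ᵀ * (β • S + P) * A⁻¹ := by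
    intro β
    rw [Matrix.mul_add, Matrix.add_mul, Matrix.mul_smul, Matrix.smul_mul, ← hMdef, hPA]
    congr 1
    symm
    calc (A⁻¹)ᵀ * (Aᵀ * A) * A⁻¹ = ((A⁻¹)ᵀ * Aᵀ) * (A * A⁻¹) := by
          simp only [Matrix.mul_assoc]
      _ = 1 := by rw [hAt', Matrix.mul_inv_of_invertible, Matrix.one_mul]
  -- -M is psd
  have hMneg : (-M).PosSemidef := by
    have h := hSneg.mul_mul_conjTranspose_same (A⁻¹)ᵀ
    have : (A⁻¹)ᵀ * (-S) * ((A⁻¹)ᵀ)ᴴ = -M := by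
      rw [conjTranspose_eq_transpose_of_trivial, transpose_transpose, hMdef]
      simp [Matrix.mul_assoc]
    rwa [this] at h
  -- eigenvalues nonpositive
  have hlamle : ∀ i, lam i ≤ 0 := by
    intro i
    have h1 := hMneg.dotProduct_mulVec_nonneg (⇑(hM.eigenvectorBasis i))
    have h2 := hM.eigenvalues_eq i
    simp only [neg_mulVec, dotProduct_neg] at h1
    simp only [RCLike.re_to_real] at h2
    rw [hlam, h2]
    linarith
  have hbdd : BddBelow (Set.range lam) := (Set.finite_range lam).bddBelow
  have hl1le : ∀ i, l1 ≤ lam i := fun i => ciInf_le hbdd i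
  -- l1 < 0
  obtain ⟨i0, hi0⟩ := exists_eq_ciInf_of_finite (f := lam)
  rw [← hl1] at hi0
  have hl1neg : l1 < 0 := by
    rcases lt_or_eq_of_le (hlamle i0) with h | h
    · rw [← hi0]; exact h
    · -- all eigenvalues zero ⇒ M = 0 ⇒ S = 0
      exfalso
      have hall : ∀ i, hM.eigenvalues i = 0 := by
        intro i
        have h1 : lam i0 ≤ lam i := by rw [hi0]; exact hl1le i
        have h2 := hlamle i
        rw [hlam] at h1 h2 h
        linarith
      have hd0 : (diagonal (RCLike.ofReal ∘ hM.eigenvalues) : Matrix (Fin m) (Fin m) ℝ)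
          = 0 := by
        ext i j
        rcases eq_or_ne i j with rfl | hij
        · simp [hall i]
        · simp [diagonal_apply_ne _ hij]
      have hM0 : M = 0 := by
        rw [hM.spectral_theorem, hd0, map_zero]
      have : S = 0 := by rw [← hSM, hM0]; simp
      exact hS0 this
  have hl1ne : l1 ≠ 0 := ne_of_lt hl1neg
  -- spectral decomposition helper
  set U : Matrix (Fin m) (Fin m) ℝ := (hM.eigenvectorUnitary : Matrix (Fin m) (Fin m) ℝ) with hU
  have hUU : U * star U = 1 := (Matrix.mem_unitaryGroup_iff).mp hM.eigenvectorUnitary.2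
  have hdecomp : ∀ β : ℝ, β • M + 1 = U * diagonal (fun i => β * lam i + 1) * star U := by
    intro β
    have hD' : (diagonal (fun i => β * lam i + 1) : Matrix (Fin m) (Fin m) ℝ)
        = β • diagonal (RCLike.ofReal ∘ hM.eigenvalues) + 1 := by
      ext i j
      rcases eq_or_ne i j with rfl | hij
      · simp [hlam]
      · simp [diagonal_apply_ne _ hij, Matrix.one_apply_ne hij]
    rw [hD', Matrix.mul_add, Matrix.mul_one, Matrix.add_mul, hUU, Matrix.mul_smul,
      Matrix.smul_mul, hU, ← Unitary.conjStarAlgAut_apply (S := ℝ), ← hM.spectral_theorem]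
  -- psd of β•M+1 from eigenvalue condition
  have hpsd_of : ∀ β : ℝ, (∀ i, 0 ≤ β * lam i + 1) → (β • M + 1).PosSemidef := by
    intro β h
    rw [hdecomp β, show star U = Uᴴ from rfl]
    exact (posSemidef_diagonal_iff.mpr h).mul_mul_conjTranspose_same U
  -- eigenvalue condition from psd
  have hof_psd : ∀ β : ℝ, (β • M + 1).PosSemidef → ∀ i, 0 ≤ β * lam i + 1 := by
    intro β h i
    have h1 := h.dotProduct_mulVec_nonneg (⇑(hM.eigenvectorBasis i))
    have hv : (β • M + 1) *ᵥ ⇑(hM.eigenvectorBasis i)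
        = (β * lam i + 1) • ⇑(hM.eigenvectorBasis i) := by
      rw [add_mulVec, one_mulVec, smul_mulVec, hM.mulVec_eigenvectorBasis, ← hlam,
        smul_smul, add_smul, one_smul]
    rw [hv, dotProduct_smul] at h1
    have hnorm : star ⇑(hM.eigenvectorBasis i) ⬝ᵥ ⇑(hM.eigenvectorBasis i) = 1 := by
      rw [dotProduct_comm, ← EuclideanSpace.inner_eq_star_dotProduct]
      have := hM.eigenvectorBasis.orthonormal.1 i
      rw [@inner_self_eq_norm_sq_to_K ℝ]
      simp [this]
    rw [hnorm, smul_eq_mul, mul_one] at h1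
    exact h1
  -- equivalence for β • S + P
  have hiff : ∀ β : ℝ, (β • S + P).PosSemidef ↔ (∀ i, 0 ≤ β * lam i + 1) := by
    intro β
    constructor
    · intro h
      apply hof_psd β
      rw [key' β]
      have := h.mul_mul_conjTranspose_same (A⁻¹)ᵀ
      rwa [conjTranspose_eq_transpose_of_trivial, transpose_transpose] at this
    · intro h
      rw [key β]
      have := (hpsd_of β h).mul_mul_conjTranspose_same Aᵀ
      rwa [conjTranspose_eq_transpose_of_trivial, transpose_transpose] at this
  have h2 : (0:ℝ) < -1 / l1 := div_pos_of_neg_of_neg (by norm_num) hl1neg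
  have h1 : (-1 / l1) * l1 = -1 := div_mul_cancel₀ _ hl1ne
  refine ⟨hl1neg, ⟨⟨le_of_lt h2, ?_⟩, ?_⟩⟩
  · rw [hiff]
    intro i
    nlinarith [hl1le i, mul_le_mul_of_nonneg_left (hl1le i) (le_of_lt h2)]
  · rintro β ⟨hβ0, hβ⟩
    rw [hiff] at hβ
    have h3 := hβ i0
    rw [hi0] at h3
    rw [le_div_iff_of_neg hl1neg]
    nlinarith
end

section
/- Let L : H → ℝ^m be a bounded linear operator with L L* = -S_B for a symmetric matrix S_B ∈ ℝ^{m×m}. Then for every v ∈ Range(L): -vᵀ S_B⁺ v = ‖L⁺ v‖² ≥ 0, with equality if and only if v = 0. -/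
/-- `Lp` is the Moore–Penrose pseudoinverse of `L`. -/
def IsMoorePenroseInverse {E F : Type*} [NormedAddCommGroup E] [InnerProductSpace ℝ E]
    [CompleteSpace E] [NormedAddCommGroup F] [InnerProductSpace ℝ F] [CompleteSpace F]
    (L : E →L[ℝ] F) (Lp : F →L[ℝ] E) : Prop :=
  L ∘L Lp ∘L L = L ∧ Lp ∘L L ∘L Lp = Lp ∧
    ContinuousLinearMap.adjoint (L ∘L Lp) = L ∘L Lp ∧
    ContinuousLinearMap.adjoint (Lp ∘L L) = Lp ∘L L

open ContinuousLinearMap in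
lemma mp_unique {E F : Type*} [NormedAddCommGroup E] [InnerProductSpace ℝ E]
    [CompleteSpace E] [NormedAddCommGroup F] [InnerProductSpace ℝ F] [CompleteSpace F]
    (A : E →L[ℝ] F) (X Y : F →L[ℝ] E)
    (hX : IsMoorePenroseInverse A X) (hY : IsMoorePenroseInverse A Y) : X = Y := by
  obtain ⟨hX1, hX2, hX3, hX4⟩ := hX
  obtain ⟨hY1, hY2, hY3, hY4⟩ := hY
  have hX1' : ∀ u, A (X (A u)) = A u := fun u => by
    have := ContinuousLinearMap.ext_iff.mp hX1 u; simpa using this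
  have hY1' : ∀ u, A (Y (A u)) = A u := fun u => by
    have := ContinuousLinearMap.ext_iff.mp hY1 u; simpa using this
  have hX2' : ∀ u, X (A (X u)) = X u := fun u => by
    have := ContinuousLinearMap.ext_iff.mp hX2 u; simpa using this
  have hY2' : ∀ u, Y (A (Y u)) = Y u := fun u => by
    have := ContinuousLinearMap.ext_iff.mp hY2 u; simpa using this
  have hAX : A ∘L X = A ∘L Y := by
    have e : (A ∘L X) ∘L (A ∘L Y) = adjoint ((A ∘L Y) ∘L (A ∘L X)) := by
      rw [adjoint_comp, hX3, hY3]
    have e2 : (A ∘L Y) ∘L (A ∘L X) = A ∘L X := by ext u; simp [hY1']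
    have e1 : A ∘L X = (A ∘L X) ∘L (A ∘L Y) := by rw [e, e2, hX3]
    have e3 : (A ∘L X) ∘L (A ∘L Y) = A ∘L Y := by ext u; simp [hX1']
    rw [e1, e3]
  have hXA : X ∘L A = Y ∘L A := by
    have e : (Y ∘L A) ∘L (X ∘L A) = adjoint ((X ∘L A) ∘L (Y ∘L A)) := by
      rw [adjoint_comp, hX4, hY4]
    have e2 : (X ∘L A) ∘L (Y ∘L A) = X ∘L A := by ext u; simp [hY1']
    have e1 : X ∘L A = (Y ∘L A) ∘L (X ∘L A) := by rw [e, e2, hX4]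
    have e3 : (Y ∘L A) ∘L (X ∘L A) = Y ∘L A := by ext u; simp [hX1']
    rw [e1, e3]
  have hAX' : ∀ u, A (X u) = A (Y u) := fun u => by
    have := ContinuousLinearMap.ext_iff.mp hAX u; simpa using this
  have hXA' : ∀ u, X (A u) = Y (A u) := fun u => by
    have := ContinuousLinearMap.ext_iff.mp hXA u; simpa using this
  ext u
  calc X u = X (A (X u)) := (hX2' u).symm
    _ = X (A (Y u)) := by rw [hAX']
    _ = Y (A (Y u)) := hXA' _
    _ = Y u := hY2' u

open ContinuousLinearMap in
/-- If `L : H → ℝ^m` is bounded linear with `L L* = -S_B` for a symmetric operator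
`S_B`, then for every `v ∈ Range(L)`: `-⟨v, S_B⁺ v⟩ = ‖L⁺ v‖² ≥ 0`, with equality
iff `v = 0`. This is the coercivity statement of Theorem 3.3. -/
theorem stmt_7 {H : Type*} [NormedAddCommGroup H] [InnerProductSpace ℝ H]
    [CompleteSpace H] {m : ℕ}
    (L : H →L[ℝ] EuclideanSpace ℝ (Fin m))
    (SB : EuclideanSpace ℝ (Fin m) →L[ℝ] EuclideanSpace ℝ (Fin m))
    (hSB : ContinuousLinearMap.adjoint SB = SB)
    (hLSB : L ∘L ContinuousLinearMap.adjoint L = -SB)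
    (SBp : EuclideanSpace ℝ (Fin m) →L[ℝ] EuclideanSpace ℝ (Fin m))
    (hSBp : IsMoorePenroseInverse SB SBp)
    (Lp : EuclideanSpace ℝ (Fin m) →L[ℝ] H)
    (hLp : IsMoorePenroseInverse L Lp) :
    ∀ v ∈ Set.range L,
      (-(inner ℝ v (SBp v) : ℝ) = ‖Lp v‖ ^ 2) ∧
      0 ≤ -(inner ℝ v (SBp v) : ℝ) ∧
      (-(inner ℝ v (SBp v) : ℝ) = 0 ↔ v = 0) := by
  obtain ⟨hL1, hL2, hL3, hL4⟩ := hLp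
  have h1 : ∀ x, L (Lp (L x)) = L x := fun x => by
    have := ContinuousLinearMap.ext_iff.mp hL1 x; simpa using this
  have h2 : ∀ x, Lp (L (Lp x)) = Lp x := fun x => by
    have := ContinuousLinearMap.ext_iff.mp hL2 x; simpa using this
  have hq : ∀ x, adjoint L (adjoint Lp x) = Lp (L x) := fun x => by
    have : adjoint L ∘L adjoint Lp = Lp ∘L L := by rw [← adjoint_comp, hL4]
    have := ContinuousLinearMap.ext_iff.mp this x; simpa using this
  have hp : ∀ x, adjoint Lp (adjoint L x) = L (Lp x) := fun x => by
    have : adjoint Lp ∘L adjoint L = L ∘L Lp := by rw [← adjoint_comp, hL3]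
    have := ContinuousLinearMap.ext_iff.mp this x; simpa using this
  have hSBeq : ∀ x, SB x = -(L (adjoint L x)) := fun x => by
    have := ContinuousLinearMap.ext_iff.mp hLSB x
    simp at this
    exact neg_eq_iff_eq_neg.mp this.symm
  set T : EuclideanSpace ℝ (Fin m) →L[ℝ] EuclideanSpace ℝ (Fin m) :=
    -(adjoint Lp ∘L Lp) with hT
  have hST : SB ∘L T = L ∘L Lp := by
    ext x
    simp [hT, hSBeq, hq, h2]
  have hTS : T ∘L SB = L ∘L Lp := by
    ext x
    simp only [hT, comp_apply, neg_apply, hSBeq, map_neg, neg_neg]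
    rw [← hq]
    simp [hp, h1]
  have hMT : IsMoorePenroseInverse SB T := by
    refine ⟨?_, ?_, ?_, ?_⟩
    · ext x
      simp [hT, hSBeq, hq, h2, h1]
    · ext x
      simp [hT, hSBeq, hq, h2, h1]
    · rw [hST]; exact hL3
    · rw [hTS]; exact hL3
  have hKey : SBp = T := mp_unique SB SBp T hSBp hMT
  rintro v ⟨x, rfl⟩
  set v := L x with hv
  have hvLp : L (Lp v) = v := h1 x
  have hinner : -(inner ℝ v (SBp v) : ℝ) = ‖Lp v‖ ^ 2 := by
    rw [hKey]
    simp only [hT, neg_apply, comp_apply, inner_neg_right, neg_neg]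
    rw [adjoint_inner_right, real_inner_self_eq_norm_sq]
  refine ⟨hinner, ?_, ?_⟩
  · rw [hinner]; positivity
  · rw [hinner]
    constructor
    · intro h
      have : Lp v = 0 := by
        have := sq_eq_zero_iff.mp h
        simpa using this
      rw [← hvLp, this, map_zero]
    · intro h
      have : Lp v = 0 := by rw [h, map_zero]
      rw [this]; simp
end

section
/- Let u₁, …, u_m ∈ H and suppose the only vectors w ∈ ℝ^m with ∑_j w_j u_j = 0 are the constant vectors w₁ = ⋯ = w_m. Define L : H → ℝ^m by (L h)_j = ⟨h, u_j⟩. Then Range(L) = { v ∈ ℝ^m : ∑_j v_j = 0 }. -/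
/-- Abstract version of Lemma 3.7(c): if the vectors `w ∈ ℝ^m` with `∑_j w_j u_j = 0`
are exactly the constant vectors, then the range of `L : h ↦ (⟨h, u_j⟩)_j` is the
space of zero-sum vectors `{v : ∑_j v_j = 0}`. -/
theorem stmt_10 {H : Type*} [NormedAddCommGroup H] [InnerProductSpace ℝ H]
    [CompleteSpace H] {m : ℕ} (u : Fin m → H)
    (hker : ∀ w : Fin m → ℝ, (∑ j, w j • u j = 0 ↔ ∃ c : ℝ, ∀ j, w j = c)) :
    {v : Fin m → ℝ | ∃ h : H, ∀ j, (inner ℝ h (u j) : ℝ) = v j} =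
      {v : Fin m → ℝ | ∑ j, v j = 0} := by
  -- sum of u's is zero
  have hsum : ∑ j, u j = 0 := by
    have := (hker fun _ => 1).mpr ⟨1, fun _ => rfl⟩
    simpa using this
  classical
  set L : H →ₗ[ℝ] EuclideanSpace ℝ (Fin m) :=
    { toFun := fun h => WithLp.toLp 2 (fun j => inner ℝ h (u j))
      map_add' := by intro x y; ext j; simp [inner_add_left]
      map_smul' := by intro c x; ext j; simp [real_inner_smul_left] } with hL
  set S : Submodule ℝ (EuclideanSpace ℝ (Fin m)) := LinearMap.range L with hS
  ext v
  simp only [Set.mem_setOf_eq]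
  constructor
  · rintro ⟨h, hh⟩
    have : ∑ j, v j = inner ℝ h (∑ j, u j) := by
      rw [inner_sum]
      exact (Finset.sum_congr rfl fun j _ => (hh j).symm)
    rw [this, hsum, inner_zero_right]
  · intro hv
    -- range sums to zero
    have hSsum : ∀ s ∈ S, ∑ j, s j = 0 := by
      rintro s ⟨h, rfl⟩
      have : ∑ j, (L h) j = inner ℝ h (∑ j, u j) := by
        rw [inner_sum]; rfl
      rw [this, hsum, inner_zero_right]
    -- orthogonal complement consists of constants
    obtain ⟨y, hy, z, hz, hvyz⟩ := S.exists_add_mem_mem_orthogonal (WithLp.toLp 2 v : EuclideanSpace ℝ (Fin m))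
    -- z is orthogonal to all L h, so ∑ z_j u_j = 0
    have hz0 : ∑ j, z j • u j = 0 := by
      have key : ∀ h : H, (inner ℝ h (∑ j, z j • u j) : ℝ) = 0 := by
        intro h
        have h0 := (Submodule.mem_orthogonal S z).mp hz (L h) ⟨h, rfl⟩
        simp only [hL, PiLp.inner_apply, RCLike.inner_apply, conj_trivial,
          LinearMap.coe_mk, AddHom.coe_mk] at h0
        rw [inner_sum]
        simp only [real_inner_smul_right]
        rw [← h0]
      have := key (∑ j, z j • u j)
      exact inner_self_eq_zero.mp this
    obtain ⟨c, hc⟩ := (hker z).mp hz0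
    -- sum of z is 0 since sum of v and sum of y are 0
    have hzsum : ∑ j, z j = 0 := by
      have hysum := hSsum y hy
      have : ∑ j, v j = ∑ j, y j + ∑ j, z j := by
        rw [← Finset.sum_add_distrib]
        exact Finset.sum_congr rfl fun j _ => congrArg (fun w : EuclideanSpace ℝ (Fin m) => w j) hvyz
      rw [hv, hysum] at this
      linarith
    have hc0 : ∀ j, z j = 0 := by
      rcases Nat.eq_zero_or_pos m with hm | hm
      · intro j; exact absurd j.isLt (by omega)
      · have : (m : ℝ) * c = 0 := by
          rw [← hzsum]
          simp [hc, Finset.sum_const, Finset.card_fin, mul_comm]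
        have hcz : c = 0 := by
          have hmne : (m : ℝ) ≠ 0 := Nat.cast_ne_zero.mpr (by omega)
          exact (mul_eq_zero.mp this).resolve_left hmne
        intro j; rw [hc j, hcz]
    have hvy : WithLp.toLp 2 v = y := by
      ext j
      have := congrArg (fun w : EuclideanSpace ℝ (Fin m) => w j) hvyz
      simp [hc0 j] at this
      exact this
    obtain ⟨h, hh⟩ := hvy ▸ hy
    exact ⟨h, fun j => congrArg (fun w : EuclideanSpace ℝ (Fin m) => w j) hh⟩
end
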